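/- Example 2.1 (existence of a nonconstant DR solution for the network 2X ⇌ 2Y, ∅ ⇌ X, ∅ ⇌ Y): Let κ₁,…,κ₆ > 0 and x₀, y₀ > 0 satisfy κ₄ = κ₆ and √(κ₁/κ₂) = κ₅/κ₃ = y₀/x₀. Define x(t) := (x₀ − κ₃/κ₄)e^{−κ₄ t} + κ₃/κ₄ and y(t) := (y₀ − κ₅/κ₆)e^{−κ₆ t} + κ₅/κ₆. Then x and y satisfy the nonlinear mass-action system x'(t) = −2κ₁x(t)² + 2κ₂y(t)² + κ₃ − κ₄x(t), y'(t) = 2κ₁x(t)² − 2κ₂y(t)² + κ₅ − κ₆y(t) with x(0) = x₀, y(0) = y₀, and the DR condition κ₁ x(t)² = κ₂ y(t)² holds for all t ≥ 0. -/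

import Mathlib

/-- Example 2.1: for the network `2X ⇌ 2Y, ∅ ⇌ X, ∅ ⇌ Y`, if `κ₄ = κ₆` and
`√κ₁/√κ₂ = κ₅/κ₃ = y₀/x₀`, then the explicit exponential functions `x(t), y(t)` solve the
nonlinear mass-action system and satisfy the DR condition `κ₁ x(t)² = κ₂ y(t)²` for all
`t ≥ 0`. -/
theorem example21_DR_solution
    (κ₁ κ₂ κ₃ κ₄ κ₅ κ₆ x₀ y₀ : ℝ)
    (h1 : 0 < κ₁) (h2 : 0 < κ₂) (h3 : 0 < κ₃) (h4 : 0 < κ₄) (h5 : 0 < κ₅) (h6 : 0 < κ₆)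
    (hx₀ : 0 < x₀) (hy₀ : 0 < y₀)
    (h46 : κ₄ = κ₆)
    (hratio1 : Real.sqrt κ₁ / Real.sqrt κ₂ = κ₅ / κ₃)
    (hratio2 : κ₅ / κ₃ = y₀ / x₀) :
    let x : ℝ → ℝ := fun t => (x₀ - κ₃ / κ₄) * Real.exp (-κ₄ * t) + κ₃ / κ₄
    let y : ℝ → ℝ := fun t => (y₀ - κ₅ / κ₆) * Real.exp (-κ₆ * t) + κ₅ / κ₆
    x 0 = x₀ ∧ y 0 = y₀ ∧
    ∀ t ≥ (0:ℝ),
      HasDerivWithinAt x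
        (-2 * κ₁ * (x t) ^ 2 + 2 * κ₂ * (y t) ^ 2 + κ₃ - κ₄ * x t) (Set.Ici 0) t
      ∧ HasDerivWithinAt y
          (2 * κ₁ * (x t) ^ 2 - 2 * κ₂ * (y t) ^ 2 + κ₅ - κ₆ * y t) (Set.Ici 0) t
      ∧ κ₁ * (x t) ^ 2 = κ₂ * (y t) ^ 2 := by
  intro x y
  have hc : κ₅ / κ₃ > 0 := div_pos h5 h3
  -- κ₁ = κ₂ * c² where c = κ₅/κ₃
  have hs1 : Real.sqrt κ₁ = (κ₅ / κ₃) * Real.sqrt κ₂ := by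
    have h2' : Real.sqrt κ₂ ≠ 0 := ne_of_gt (Real.sqrt_pos.mpr h2)
    field_simp at hratio1 ⊢
    linarith [hratio1]
  have hk : κ₁ = κ₂ * (κ₅ / κ₃) ^ 2 := by
    have := congrArg (fun z => z ^ 2) hs1
    simp only [mul_pow, Real.sq_sqrt h1.le, Real.sq_sqrt h2.le] at this
    linarith
  have hy0 : y₀ = (κ₅ / κ₃) * x₀ := by
    field_simp at hratio2 ⊢
    linarith [hratio2]
  -- y = c * x
  have hyx : ∀ t : ℝ, y t = (κ₅ / κ₃) * x t := by
    intro t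
    simp only [x, y, h46, hy0]
    field_simp
  refine ⟨by simp [x], by simp [y], fun t ht => ?_⟩
  have hDR : κ₁ * (x t) ^ 2 = κ₂ * (y t) ^ 2 := by
    rw [hyx t, hk]; ring
  have hdx : HasDerivWithinAt x (-κ₄ * ((x₀ - κ₃ / κ₄) * Real.exp (-κ₄ * t))) (Set.Ici 0) t := by
    have : HasDerivAt x ((x₀ - κ₃ / κ₄) * (Real.exp (-κ₄ * t) * -κ₄)) t := by
      have h := (Real.hasDerivAt_exp (-κ₄ * t)).comp t ((hasDerivAt_id t).const_mul (-κ₄))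
      simpa [x] using ((h.const_mul (x₀ - κ₃ / κ₄)).add_const (κ₃ / κ₄))
    have := this.hasDerivWithinAt (s := Set.Ici 0)
    exact this.congr_deriv (by ring)
  have hdy : HasDerivWithinAt y (-κ₆ * ((y₀ - κ₅ / κ₆) * Real.exp (-κ₆ * t))) (Set.Ici 0) t := by
    have : HasDerivAt y ((y₀ - κ₅ / κ₆) * (Real.exp (-κ₆ * t) * -κ₆)) t := by
      have h := (Real.hasDerivAt_exp (-κ₆ * t)).comp t ((hasDerivAt_id t).const_mul (-κ₆))
      simpa [y] using ((h.const_mul (y₀ - κ₅ / κ₆)).add_const (κ₅ / κ₆))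
    have := this.hasDerivWithinAt (s := Set.Ici 0)
    exact this.congr_deriv (by ring)
  refine ⟨?_, ?_, hDR⟩
  · convert hdx using 1
    have hxE : x t = (x₀ - κ₃ / κ₄) * Real.exp (-κ₄ * t) + κ₃ / κ₄ := rfl
    have h0 : -2 * κ₁ * x t ^ 2 + 2 * κ₂ * y t ^ 2 = 0 := by linarith [hDR]
    have : -2 * κ₁ * x t ^ 2 + 2 * κ₂ * y t ^ 2 + κ₃ - κ₄ * x t = κ₃ - κ₄ * x t := by
      linarith [h0]
    rw [this, hxE]
    field_simp
    ring
  · convert hdy using 1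
    have hyE : y t = (y₀ - κ₅ / κ₆) * Real.exp (-κ₆ * t) + κ₅ / κ₆ := rfl
    have h0 : 2 * κ₁ * x t ^ 2 - 2 * κ₂ * y t ^ 2 = 0 := by linarith [hDR]
    have : 2 * κ₁ * x t ^ 2 - 2 * κ₂ * y t ^ 2 + κ₅ - κ₆ * y t = κ₅ - κ₆ * y t := by
      linarith [h0]
    rw [this, hyE]
    field_simp
    ring
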